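/- Let n be a positive integer and let G be a set of lines of PG(3,q) that does not contain n+1 mutually skew lines. Then |G| ≤ n(q^2+q+1). -/

import Mathlib

open Submodule

/-- A chamber of `PG(3,q)`: a mutually incident point-line-plane triple,
where points, lines and planes are the 1-, 2- and 3-dimensional subspaces
of a 4-dimensional vector space over `F = GF(q)`. -/
structure Chamber (F : Type) [Field F] where
  pt : Submodule F (Fin 4 → F)
  line : Submodule F (Fin 4 → F)
  plane : Submodule F (Fin 4 → F)
  pt_rank : Module.finrank F pt = 1
  line_rank : Module.finrank F line = 2
  plane_rank : Module.finrank F plane = 3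
  pt_le_line : pt ≤ line
  line_le_plane : line ≤ plane

/-- Two chambers are opposite if each point lies outside the other's plane
and the two lines are skew (intersect trivially). -/
def Chamber.Opp {F : Type} [Field F] (c d : Chamber F) : Prop :=
  ¬ c.pt ≤ d.plane ∧ ¬ d.pt ≤ c.plane ∧ c.line ⊓ d.line = ⊥

/-- An independent set of the Kneser graph on chambers: pairwise non-opposite chambers. -/
def IsIndep {F : Type} [Field F] (M : Set (Chamber F)) : Prop :=
  ∀ c ∈ M, ∀ d ∈ M, ¬ c.Opp d

/-- A maximal independent set of the Kneser graph on chambers. -/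
def IsMaxIndep {F : Type} [Field F] (M : Set (Chamber F)) : Prop :=
  IsIndep M ∧ ∀ c : Chamber F, (∀ d ∈ M, ¬ c.Opp d) → c ∈ M

/-- The `M`-weight of a line `l`: the number of chambers of `M` whose line is `l`. -/
noncomputable def wLine {F : Type} [Field F] (M : Set (Chamber F))
    (l : Submodule F (Fin 4 → F)) : ℕ :=
  {c ∈ M | c.line = l}.ncard

/-- The `M`-weight of an incident line-plane pair. -/
noncomputable def wPair {F : Type} [Field F] (M : Set (Chamber F))
    (l π : Submodule F (Fin 4 → F)) : ℕ :=
  {c ∈ M | c.line = l ∧ c.plane = π}.ncard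

/-- The `M`-weight of an incident point-line pair. -/
noncomputable def wPt {F : Type} [Field F] (M : Set (Chamber F))
    (P l : Submodule F (Fin 4 → F)) : ℕ :=
  {c ∈ M | c.pt = P ∧ c.line = l}.ncard

/-- A `π`-line of `M`: a line of weight `≠ (q+1)^2` lying in a plane `π` such that
the pair `(l, π)` has weight `q+1`. -/
def IsPiLine {F : Type} [Field F] [Fintype F] (M : Set (Chamber F))
    (l : Submodule F (Fin 4 → F)) : Prop :=
  Module.finrank F l = 2 ∧ wLine M l ≠ (Fintype.card F + 1)^2 ∧
    ∃ π : Submodule F (Fin 4 → F), Module.finrank F π = 3 ∧ l ≤ π ∧ wPair M l π = Fintype.card F + 1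

/-- A `P`-line of `M`: a line of weight `≠ (q+1)^2` through a point `P` such that
the pair `(P, l)` has weight `q+1`. -/
def IsPLine {F : Type} [Field F] [Fintype F] (M : Set (Chamber F))
    (l : Submodule F (Fin 4 → F)) : Prop :=
  Module.finrank F l = 2 ∧ wLine M l ≠ (Fintype.card F + 1)^2 ∧
    ∃ P : Submodule F (Fin 4 → F), Module.finrank F P = 1 ∧ P ≤ l ∧ wPt M P l = Fintype.card F + 1


/-! ### Auxiliary machinery for `no_skew_bound` -/

section NoSkewAux

open Module

variable {F : Type} [Field F]

lemma exists_noroot_quadratic (F : Type) [Field F] [Fintype F] :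
    ∃ b c : F, ∀ t : F, t * t - b * t + c ≠ 0 := by
  by_contra h
  push_neg at h
  have hsurj : Function.Surjective (Sym2.lift ⟨fun r s => ((r + s, r * s) : F × F),
      fun r s => by simp [add_comm, mul_comm]⟩) := by
    rintro ⟨b, c⟩
    obtain ⟨t, ht⟩ := h b c
    refine ⟨s(t, b - t), ?_⟩
    simp only [Sym2.lift_mk, Prod.mk.injEq]
    exact ⟨by ring, by linear_combination (-1 : F) * ht⟩
  have hcard := Fintype.card_le_of_surjective _ hsurj
  rw [Sym2.card, Fintype.card_prod] at hcard
  have hq : 2 ≤ Fintype.card F := Fintype.one_lt_card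
  set q := Fintype.card F
  have h2 : 2 * ((q + 1).choose 2) = q * q + q := by
    rw [Nat.choose_two_right]
    have h3 : (q + 1) * (q + 1 - 1) = q * (q + 1) := by
      simp [Nat.mul_comm]
    rw [h3, Nat.mul_div_cancel' (Nat.even_mul_succ_self q).two_dvd]
    ring
  nlinarith [hcard, h2, hq]

/-- Linear map whose kernel is a spread line. -/
def phiSpread (b c α β : F) : (Fin 4 → F) →ₗ[F] (F × F) where
  toFun x := (α * x 0 - c * β * x 1 - x 2, β * x 0 + (α - b * β) * x 1 - x 3)
  map_add' x y := by
    simp only [Pi.add_apply, Prod.mk_add_mk, Prod.mk.injEq]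
    exact ⟨by ring, by ring⟩
  map_smul' r x := by
    simp only [Pi.smul_apply, smul_eq_mul, RingHom.id_apply, Prod.smul_mk, Prod.mk.injEq]
    exact ⟨by ring, by ring⟩

def phiSpreadInf : (Fin 4 → F) →ₗ[F] (F × F) where
  toFun x := (x 0, x 1)
  map_add' _ _ := rfl
  map_smul' _ _ := rfl

lemma phiSpread_surj (b c α β : F) : Function.Surjective (phiSpread b c α β) := by
  rintro ⟨u, v⟩
  exact ⟨![0, 0, -u, -v], by simp [phiSpread]⟩

lemma phiSpreadInf_surj : Function.Surjective (phiSpreadInf (F := F)) := by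
  rintro ⟨u, v⟩
  exact ⟨![u, v, 0, 0], by simp [phiSpreadInf]⟩

lemma finrank_ker_of_surj (f : (Fin 4 → F) →ₗ[F] (F × F)) (hf : Function.Surjective f) :
    finrank F (LinearMap.ker f) = 2 := by
  have h := LinearMap.finrank_range_add_finrank_ker f
  rw [LinearMap.range_eq_top.mpr hf, finrank_top] at h
  have h1 : finrank F (F × F) = 2 := by simp
  have h2 : finrank F (Fin 4 → F) = 4 := by simp
  omega

lemma witness_mem (b c α β : F) :
    (![1, 0, α, β] : Fin 4 → F) ∈ LinearMap.ker (phiSpread b c α β) := by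
  simp only [LinearMap.mem_ker, phiSpread, LinearMap.coe_mk, AddHom.coe_mk]
  simp [Prod.ext_iff]

lemma ker_phiSpread_injective (b c : F) : Function.Injective
    (fun p : F × F => LinearMap.ker (phiSpread b c p.1 p.2)) := by
  rintro ⟨α, β⟩ ⟨α', β'⟩ hk
  have hk' : LinearMap.ker (phiSpread b c α β) = LinearMap.ker (phiSpread b c α' β') := hk
  have h1 := witness_mem b c α β
  rw [hk'] at h1
  simp only [LinearMap.mem_ker, phiSpread, LinearMap.coe_mk, AddHom.coe_mk] at h1
  simp [Prod.ext_iff] at h1 ⊢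
  obtain ⟨e1, e2⟩ := h1
  exact ⟨by linear_combination -e1, by linear_combination -e2⟩

lemma ker_phiSpread_ne_inf (b c α β : F) :
    LinearMap.ker (phiSpread b c α β) ≠ LinearMap.ker (phiSpreadInf (F := F)) := by
  intro hk
  have h1 := witness_mem b c α β
  rw [hk] at h1
  simp only [LinearMap.mem_ker, phiSpreadInf, LinearMap.coe_mk, AddHom.coe_mk] at h1
  simp [Prod.ext_iff] at h1

lemma skew_inf_spread (b c α β : F) :
    LinearMap.ker (phiSpread b c α β) ⊓ LinearMap.ker (phiSpreadInf (F := F)) = ⊥ := by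
  rw [eq_bot_iff]
  rintro x ⟨h1, h2⟩
  simp only [SetLike.mem_coe, LinearMap.mem_ker, phiSpread, phiSpreadInf, LinearMap.coe_mk,
    AddHom.coe_mk, Prod.ext_iff, Prod.mk.injEq] at h1 h2
  obtain ⟨e1, e2⟩ := h1
  obtain ⟨f1, f2⟩ := h2
  simp only [Prod.fst_zero, Prod.snd_zero] at e1 e2 f1 f2
  have h2' : x 2 = 0 := by linear_combination -e1 + α * f1 - c * β * f2
  have h3' : x 3 = 0 := by linear_combination -e2 + β * f1 + (α - b * β) * f2
  have h0 : x = 0 := by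
    funext i
    fin_cases i <;> simpa using (by assumption : _ = (0 : F))
  simp [h0]

lemma skew_phiSpread (b c : F) (hbc : ∀ t : F, t * t - b * t + c ≠ 0)
    (α β α' β' : F) (hne : (α, β) ≠ (α', β')) :
    LinearMap.ker (phiSpread b c α β) ⊓ LinearMap.ker (phiSpread b c α' β') = ⊥ := by
  rw [eq_bot_iff]
  rintro x ⟨h1, h2⟩
  simp only [SetLike.mem_coe, LinearMap.mem_ker, phiSpread, LinearMap.coe_mk,
    AddHom.coe_mk, Prod.ext_iff, Prod.mk.injEq] at h1 h2
  obtain ⟨e1, e2⟩ := h1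
  obtain ⟨f1, f2⟩ := h2
  simp only [Prod.fst_zero, Prod.snd_zero] at e1 e2 f1 f2
  have hd : ¬(α - α' = 0 ∧ β - β' = 0) := by
    rintro ⟨hh1, hh2⟩
    exact hne (by rw [Prod.mk.injEq]; exact ⟨by linear_combination hh1, by linear_combination hh2⟩)
  have hD : (α - α') * (α - α') - b * (α - α') * (β - β') + c * ((β - β') * (β - β')) ≠ 0 := by
    rcases eq_or_ne (β - β') 0 with hb0 | hb0
    · have ha : α - α' ≠ 0 := by tauto
      simpa [hb0] using mul_ne_zero ha ha
    · intro hD0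
      apply hbc ((α - α') / (β - β'))
      have key : ((α - α') / (β - β')) * ((α - α') / (β - β')) - b * ((α - α') / (β - β')) + c
          = ((α - α') * (α - α') - b * (α - α') * (β - β') + c * ((β - β') * (β - β')))
            / ((β - β') * (β - β')) := by
        field_simp
      rw [key, hD0, zero_div]
  have E1 : (α - α') * x 0 - c * (β - β') * x 1 = 0 := by linear_combination e1 - f1
  have E2 : (β - β') * x 0 + ((α - α') - b * (β - β')) * x 1 = 0 := by linear_combination e2 - f2
  have hx0 : x 0 = 0 := by
    have hDx : ((α - α') * (α - α') - b * (α - α') * (β - β') + c * ((β - β') * (β - β'))) * x 0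
        = 0 := by linear_combination ((α - α') - b * (β - β')) * E1 + c * (β - β') * E2
    exact (mul_eq_zero.mp hDx).resolve_left hD
  have hx1 : x 1 = 0 := by
    have hDx : ((α - α') * (α - α') - b * (α - α') * (β - β') + c * ((β - β') * (β - β'))) * x 1
        = 0 := by linear_combination (-(β - β')) * E1 + (α - α') * E2
    exact (mul_eq_zero.mp hDx).resolve_left hD
  have hx2 : x 2 = 0 := by linear_combination -e1 + α * hx0 - c * β * hx1
  have hx3 : x 3 = 0 := by linear_combination -e2 + β * hx0 + (α - b * β) * hx1
  have h0 : x = 0 := by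
    funext i
    fin_cases i <;> simpa using (by assumption : _ = (0 : F))
  simp [h0]

lemma exists_equiv_map_eq {V : Type} [AddCommGroup V] [Module F V] [FiniteDimensional F V]
    (l m : Submodule F V) (h : finrank F l = finrank F m) :
    ∃ e : V ≃ₗ[F] V, l.map (e : V →ₗ[F] V) = m := by
  obtain ⟨l', hl'⟩ := Submodule.exists_isCompl l
  obtain ⟨m', hm'⟩ := Submodule.exists_isCompl m
  have hrk : finrank F l' = finrank F m' := by
    have h1 := Submodule.finrank_add_eq_of_isCompl hl'
    have h2 := Submodule.finrank_add_eq_of_isCompl hm'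
    omega
  let e₁ : l ≃ₗ[F] m := LinearEquiv.ofFinrankEq _ _ h
  let e₂ : l' ≃ₗ[F] m' := LinearEquiv.ofFinrankEq _ _ hrk
  let e : V ≃ₗ[F] V :=
    (Submodule.prodEquivOfIsCompl l l' hl').symm.trans
      ((e₁.prodCongr e₂).trans (Submodule.prodEquivOfIsCompl m m' hm'))
  refine ⟨e, ?_⟩
  have hle : l.map (e : V →ₗ[F] V) ≤ m := by
    rintro _ ⟨x, hx, rfl⟩
    have hsymm : (l.prodEquivOfIsCompl l' hl').symm x = ((⟨x, hx⟩ : l), 0) :=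
      Submodule.prodEquivOfIsCompl_symm_apply_left (h := hl') (x := (⟨x, hx⟩ : l))
    have hex : e x = e₁ ⟨x, hx⟩ := by
      simp only [e, LinearEquiv.trans_apply, hsymm]
      simp [Submodule.coe_prodEquivOfIsCompl']
    rw [LinearEquiv.coe_coe, hex]
    exact (e₁ ⟨x, hx⟩).2
  refine Submodule.eq_of_le_of_finrank_eq hle ?_
  rw [LinearEquiv.finrank_map_eq]
  exact h

variable [Fintype F]

noncomputable def fiberEquivAux {V : Type} [AddCommGroup V] [Module F V] [FiniteDimensional F V]
    (l : Submodule F V) (hl : finrank F l = 2) :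
    {s : {s : Fin 2 → V // LinearIndependent F s} //
        Submodule.span F (Set.range s.1) = l} ≃
      {t : Fin 2 → l // LinearIndependent F t} where
  toFun s := ⟨fun i => ⟨s.1.1 i, by
      have := Submodule.subset_span (R := F) (Set.mem_range_self (f := s.1.1) i)
      rwa [s.2] at this⟩,
    by
      apply LinearIndependent.of_comp l.subtype
      exact s.1.2⟩
  invFun t := ⟨⟨fun i => (t.1 i : V), t.2.map' l.subtype (Submodule.ker_subtype l)⟩, by
    have hind : LinearIndependent F (fun i => ((t.1 i : V))) :=
      t.2.map' l.subtype (Submodule.ker_subtype l)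
    show Submodule.span F (Set.range (fun i => ((t.1 i : V)))) = l
    apply Submodule.eq_of_le_of_finrank_eq
    · rw [Submodule.span_le]
      rintro _ ⟨i, rfl⟩
      exact (t.1 i).2
    · rw [finrank_span_eq_card hind, hl]
      simp⟩
  left_inv s := by ext i; rfl
  right_inv t := by ext i; rfl

lemma card_two_dim_mul (hd : finrank F (Fin 4 → F) = 4) :
    Nat.card {l : Submodule F (Fin 4 → F) // finrank F l = 2} *
      ((Fintype.card F ^ 2 - 1) * (Fintype.card F ^ 2 - Fintype.card F)) =
    (Fintype.card F ^ 4 - 1) * (Fintype.card F ^ 4 - Fintype.card F) := by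
  classical
  set q := Fintype.card F with hq
  have hT : Nat.card {s : Fin 2 → (Fin 4 → F) // LinearIndependent F s} =
      (q ^ 4 - 1) * (q ^ 4 - q) := by
    rw [card_linearIndependent (by rw [hd]; norm_num)]
    rw [hd, Fin.prod_univ_two]
    norm_num
    rfl
  letI : Fintype (Submodule F (Fin 4 → F)) := Fintype.ofFinite _
  have hσ : ∀ s : {s : Fin 2 → (Fin 4 → F) // LinearIndependent F s},
      finrank F (Submodule.span F (Set.range s.1)) = 2 := by
    intro s
    rw [finrank_span_eq_card s.2]
    simp
  let σ : {s : Fin 2 → (Fin 4 → F) // LinearIndependent F s} →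
      {l : Submodule F (Fin 4 → F) // finrank F l = 2} :=
    fun s => ⟨Submodule.span F (Set.range s.1), hσ s⟩
  have hfib : ∀ l : {l : Submodule F (Fin 4 → F) // finrank F l = 2},
      Nat.card {s // σ s = l} = (q ^ 2 - 1) * (q ^ 2 - q) := by
    rintro ⟨l, hl⟩
    have he : {s // σ s = ⟨l, hl⟩} ≃ {t : Fin 2 → l // LinearIndependent F t} := by
      refine (Equiv.subtypeEquivRight ?_).trans (fiberEquivAux l hl)
      intro s
      constructor
      · intro h; exact congrArg Subtype.val h
      · intro h; exact Subtype.ext h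
    rw [Nat.card_congr he, card_linearIndependent (by rw [hl])]
    rw [hl, Fin.prod_univ_two]
    norm_num
    rfl
  have hkey : (q^4-1)*(q^4-q) =
      ∑ _l : {l : Submodule F (Fin 4 → F) // finrank F l = 2}, ((q^2-1)*(q^2-q)) := by
    rw [← hT, Nat.card_eq_fintype_card,
      Fintype.card_congr (Equiv.sigmaFiberEquiv σ).symm, Fintype.card_sigma]
    refine Finset.sum_congr rfl fun l _ => ?_
    rw [← Nat.card_eq_fintype_card]
    exact hfib l
  rw [hkey, Finset.sum_const, smul_eq_mul, Nat.card_eq_fintype_card, Finset.card_univ]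

lemma exists_spread (F : Type) [Field F] [Fintype F] :
    ∃ S : Finset (Submodule F (Fin 4 → F)),
      S.card = Fintype.card F ^ 2 + 1 ∧ (∀ l ∈ S, finrank F l = 2) ∧
        ∀ l ∈ S, ∀ m ∈ S, l ≠ m → l ⊓ m = ⊥ := by
  classical
  obtain ⟨b, c, hbc⟩ := exists_noroot_quadratic F
  refine ⟨insert (LinearMap.ker (phiSpreadInf (F := F)))
    ((Finset.univ : Finset (F × F)).image fun p => LinearMap.ker (phiSpread b c p.1 p.2)),
    ?_, ?_, ?_⟩
  · rw [Finset.card_insert_of_notMem, Finset.card_image_of_injective _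
      (ker_phiSpread_injective b c), Finset.card_univ, Fintype.card_prod]
    · ring
    · intro hmem
      simp only [Finset.mem_image, Finset.mem_univ, true_and] at hmem
      obtain ⟨p, hp⟩ := hmem
      exact ker_phiSpread_ne_inf b c p.1 p.2 hp
  · intro l hl
    rcases Finset.mem_insert.mp hl with rfl | hl
    · exact finrank_ker_of_surj _ phiSpreadInf_surj
    · obtain ⟨p, _, rfl⟩ := Finset.mem_image.mp hl
      exact finrank_ker_of_surj _ (phiSpread_surj b c p.1 p.2)
  · intro l hl m hm hne
    rcases Finset.mem_insert.mp hl with rfl | hl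
    · rcases Finset.mem_insert.mp hm with rfl | hm
      · exact absurd rfl hne
      · obtain ⟨p, _, rfl⟩ := Finset.mem_image.mp hm
        rw [inf_comm]
        exact skew_inf_spread b c p.1 p.2
    · obtain ⟨p, _, rfl⟩ := Finset.mem_image.mp hl
      rcases Finset.mem_insert.mp hm with rfl | hm
      · exact skew_inf_spread b c p.1 p.2
      · obtain ⟨p', _, rfl⟩ := Finset.mem_image.mp hm
        refine skew_phiSpread b c hbc p.1 p.2 p'.1 p'.2 ?_
        intro hpp
        apply hne
        have : p = p' := by
          rcases p with ⟨p1, p2⟩; rcases p' with ⟨p1', p2'⟩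
          simpa using hpp
        rw [this]

end NoSkewAux

/-- A set of lines of `PG(3,q)` with no `n+1` mutually skew lines
has at most `n(q^2+q+1)` elements. -/
theorem no_skew_bound {F : Type} [Field F] [Fintype F] {q n : ℕ}
    (hq : Fintype.card F = q) (hn : 0 < n)
    (G : Set (Submodule F (Fin 4 → F)))
    (hG : ∀ l ∈ G, Module.finrank F l = 2)
    (hskew : ¬ ∃ S ⊆ G, S.ncard = n + 1 ∧
      S.Pairwise (fun l m => l ⊓ m = ⊥)) :
    G.ncard ≤ n * (q^2 + q + 1) := by
  classical
  subst hq
  set q := Fintype.card F with hq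
  have hd : Module.finrank F (Fin 4 → F) = 4 := by simp
  letI : Fintype (Submodule F (Fin 4 → F)) := Fintype.ofFinite _
  haveI : Finite ((Fin 4 → F) ≃ₗ[F] (Fin 4 → F)) :=
    Finite.of_injective (fun e => (e : (Fin 4 → F) → (Fin 4 → F))) DFunLike.coe_injective
  letI : Fintype ((Fin 4 → F) ≃ₗ[F] (Fin 4 → F)) := Fintype.ofFinite _
  obtain ⟨S, hScard, hSrank, hSskew⟩ := exists_spread F
  have hS_ne : S.Nonempty := by rw [← Finset.card_pos, hScard]; positivity
  obtain ⟨m₀, hm₀⟩ := hS_ne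
  set Sg : ((Fin 4 → F) ≃ₗ[F] (Fin 4 → F)) → Finset (Submodule F (Fin 4 → F)) :=
    fun g => S.image (fun m => m.map (g : (Fin 4 → F) →ₗ[F] (Fin 4 → F))) with hSg
  set cnt : Submodule F (Fin 4 → F) → ℕ :=
    fun l => (Finset.univ.filter (fun g : (Fin 4 → F) ≃ₗ[F] (Fin 4 → F) => l ∈ Sg g)).card
    with hcnt
  have hmul : ∀ (h g : (Fin 4 → F) ≃ₗ[F] (Fin 4 → F)) (p : Submodule F (Fin 4 → F)),
      p.map (((h * g : (Fin 4 → F) ≃ₗ[F] (Fin 4 → F))) : (Fin 4 → F) →ₗ[F] (Fin 4 → F))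
        = (p.map (g : (Fin 4 → F) →ₗ[F] (Fin 4 → F))).map
            (h : (Fin 4 → F) →ₗ[F] (Fin 4 → F)) := by
    intro h g p; rw [← Submodule.map_comp]; rfl
  have hmap_mem : ∀ (g : (Fin 4 → F) ≃ₗ[F] (Fin 4 → F)) (l),
      l ∈ Sg g ↔ ∃ m ∈ S, m.map (g : (Fin 4 → F) →ₗ[F] (Fin 4 → F)) = l := by
    intro g l; simp [hSg]
  have key : ∀ (h : (Fin 4 → F) ≃ₗ[F] (Fin 4 → F)) (l m : Submodule F (Fin 4 → F)),
      l.map (h : (Fin 4 → F) →ₗ[F] (Fin 4 → F)) = m →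
      ∀ g : (Fin 4 → F) ≃ₗ[F] (Fin 4 → F), l ∈ Sg g → m ∈ Sg (h * g) := by
    intro h l m hh g hg
    rw [hmap_mem] at hg ⊢
    obtain ⟨a, ha, hal⟩ := hg
    exact ⟨a, ha, by rw [hmul, hal, hh]⟩
  have hconst : ∀ l m : Submodule F (Fin 4 → F), Module.finrank F l = 2 →
      Module.finrank F m = 2 → cnt l = cnt m := by
    intro l m hl hm
    obtain ⟨h, hh⟩ := exists_equiv_map_eq l m (by rw [hl, hm])
    have hinv : m.map ((h⁻¹ : (Fin 4 → F) ≃ₗ[F] (Fin 4 → F)) : (Fin 4 → F) →ₗ[F] (Fin 4 → F))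
        = l := by
      rw [← hh, ← hmul, inv_mul_cancel]
      simp
    simp only [hcnt]
    refine Finset.card_bij' (fun g _ => h * g) (fun g _ => h⁻¹ * g) ?_ ?_ ?_ ?_
    · intro g hg
      simp only [Finset.mem_filter, Finset.mem_univ, true_and] at hg ⊢
      exact key h l m hh g hg
    · intro g hg
      simp only [Finset.mem_filter, Finset.mem_univ, true_and] at hg ⊢
      exact key h⁻¹ m l hinv g hg
    · intro g _; group
    · intro g _; group
  have hpos : 0 < cnt m₀ := by
    obtain ⟨h, hh⟩ := exists_equiv_map_eq m₀ m₀ rfl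
    simp only [hcnt]
    rw [Finset.card_pos]
    refine ⟨h, ?_⟩
    simp only [Finset.mem_filter, Finset.mem_univ, true_and]
    rw [hmap_mem]
    exact ⟨m₀, hm₀, hh⟩
  have hswap : ∀ A : Finset (Submodule F (Fin 4 → F)),
      ∑ g : (Fin 4 → F) ≃ₗ[F] (Fin 4 → F), (A ∩ Sg g).card = ∑ l ∈ A, cnt l := by
    intro A
    have h1 : ∀ g : (Fin 4 → F) ≃ₗ[F] (Fin 4 → F),
        (A ∩ Sg g).card = ∑ l ∈ A, if l ∈ Sg g then 1 else 0 := by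
      intro g; rw [← Finset.filter_mem_eq_inter, Finset.card_filter]
    simp_rw [h1]
    rw [Finset.sum_comm]
    refine Finset.sum_congr rfl fun l _ => ?_
    simp only [hcnt]
    rw [Finset.card_filter]
  have hSg_card : ∀ g : (Fin 4 → F) ≃ₗ[F] (Fin 4 → F), (Sg g).card = q^2 + 1 := by
    intro g
    simp only [hSg]
    rw [Finset.card_image_of_injective _
      (Submodule.map_injective_of_injective (f := (g : (Fin 4 → F) →ₗ[F] (Fin 4 → F))) g.injective), hScard]
  have hSg_rank : ∀ g : (Fin 4 → F) ≃ₗ[F] (Fin 4 → F), ∀ l ∈ Sg g,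
      Module.finrank F l = 2 := by
    intro g l hl
    rw [hmap_mem] at hl
    obtain ⟨a, ha, rfl⟩ := hl
    rw [LinearEquiv.finrank_map_eq]
    exact hSrank a ha
  have hSg_skew : ∀ g : (Fin 4 → F) ≃ₗ[F] (Fin 4 → F), ∀ l ∈ Sg g, ∀ m ∈ Sg g,
      l ≠ m → l ⊓ m = ⊥ := by
    intro g l hl m hm hne
    rw [hmap_mem] at hl hm
    obtain ⟨a, ha, rfl⟩ := hl
    obtain ⟨b, hb, rfl⟩ := hm
    rw [← Submodule.map_inf (g : (Fin 4 → F) →ₗ[F] (Fin 4 → F)) g.injective,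
      hSskew a ha b hb (fun hab => hne (by rw [hab])), Submodule.map_bot]
  have hGfin : G.Finite := Set.toFinite G
  have hbound : ∀ g : (Fin 4 → F) ≃ₗ[F] (Fin 4 → F), (hGfin.toFinset ∩ Sg g).card ≤ n := by
    intro g
    by_contra hcon
    push_neg at hcon
    obtain ⟨T, hTsub, hTcard⟩ := Finset.exists_subset_card_eq hcon
    apply hskew
    refine ⟨↑T, ?_, ?_, ?_⟩
    · intro l hl
      have h2 := Finset.mem_inter.mp (hTsub hl)
      exact hGfin.mem_toFinset.mp h2.1
    · rw [Set.ncard_coe_finset, hTcard]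
    · intro l hl m hm hne
      have hl' := (Finset.mem_inter.mp (hTsub hl)).2
      have hm' := (Finset.mem_inter.mp (hTsub hm)).2
      exact hSg_skew g l hl' m hm' hne
  set Lf : Finset (Submodule F (Fin 4 → F)) :=
    Finset.univ.filter (fun l => Module.finrank F l = 2) with hLf
  have hq2 : 2 ≤ q := Fintype.one_lt_card
  have hLf_card : Lf.card = (q^2+1) * (q^2+q+1) := by
    have hX : 0 < (q^2-1)*(q^2-q) := by
      have h1 : q < q^2 := by nlinarith
      have h2 : 1 < q^2 := by nlinarith
      exact Nat.mul_pos (by omega) (by omega)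
    have hid : ((q^2+1)*(q^2+q+1)) * ((q^2-1)*(q^2-q)) = (q^4-1)*(q^4-q) := by
      have h1 : 1 ≤ q^2 := by nlinarith
      have h2 : q ≤ q^2 := by nlinarith
      have h3 : 1 ≤ q^4 := by nlinarith
      have h4 : q ≤ q^4 := by nlinarith
      zify [h1, h2, h3, h4]
      ring
    have hc := card_two_dim_mul hd
    rw [← hq] at hc
    have hLfc : Lf.card = Nat.card {l : Submodule F (Fin 4 → F) // Module.finrank F l = 2} := by
      rw [Nat.card_eq_fintype_card, Fintype.card_subtype, hLf]
    refine Nat.eq_of_mul_eq_mul_right hX ?_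
    rw [hLfc, hc, hid]
  have hLf_sum : ∑ l ∈ Lf, cnt l
      = Fintype.card ((Fin 4 → F) ≃ₗ[F] (Fin 4 → F)) * (q^2+1) := by
    rw [← hswap Lf]
    have heq : ∀ g : (Fin 4 → F) ≃ₗ[F] (Fin 4 → F), Lf ∩ Sg g = Sg g := by
      intro g
      apply Finset.inter_eq_right.mpr
      intro l hl
      rw [hLf, Finset.mem_filter]
      exact ⟨Finset.mem_univ l, hSg_rank g l hl⟩
    simp_rw [heq, hSg_card]
    rw [Finset.sum_const, smul_eq_mul, Finset.card_univ]
  have hm₀rank : Module.finrank F m₀ = 2 := hSrank m₀ hm₀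
  have hconstsum : ∑ l ∈ Lf, cnt l = Lf.card * cnt m₀ := by
    rw [Finset.sum_congr rfl (fun l hl => hconst l m₀
      (by rw [hLf] at hl; exact (Finset.mem_filter.mp hl).2) hm₀rank)]
    rw [Finset.sum_const, smul_eq_mul]
  have hEcard : (q^2+q+1) * cnt m₀ = Fintype.card ((Fin 4 → F) ≃ₗ[F] (Fin 4 → F)) := by
    refine Nat.eq_of_mul_eq_mul_left (show 0 < q^2+1 by positivity) ?_
    calc (q^2+1) * ((q^2+q+1) * cnt m₀)
        = Lf.card * cnt m₀ := by rw [hLf_card]; ring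
      _ = ∑ l ∈ Lf, cnt l := hconstsum.symm
      _ = Fintype.card ((Fin 4 → F) ≃ₗ[F] (Fin 4 → F)) * (q^2+1) := hLf_sum
      _ = (q^2+1) * Fintype.card ((Fin 4 → F) ≃ₗ[F] (Fin 4 → F)) := by ring
  have hGsum : hGfin.toFinset.card * cnt m₀
      = ∑ g : (Fin 4 → F) ≃ₗ[F] (Fin 4 → F), (hGfin.toFinset ∩ Sg g).card := by
    rw [hswap]
    rw [Finset.sum_congr rfl (fun l hl => hconst l m₀
      (hG l (hGfin.mem_toFinset.mp hl)) hm₀rank)]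
    rw [Finset.sum_const, smul_eq_mul]
  have hfinal : hGfin.toFinset.card * cnt m₀ ≤ (n * (q^2+q+1)) * cnt m₀ := by
    rw [hGsum]
    calc ∑ g : (Fin 4 → F) ≃ₗ[F] (Fin 4 → F), (hGfin.toFinset ∩ Sg g).card
        ≤ ∑ _g : (Fin 4 → F) ≃ₗ[F] (Fin 4 → F), n :=
          Finset.sum_le_sum (fun g _ => hbound g)
      _ = Fintype.card ((Fin 4 → F) ≃ₗ[F] (Fin 4 → F)) * n := by
          rw [Finset.sum_const, smul_eq_mul, Finset.card_univ]
      _ = (n * (q^2+q+1)) * cnt m₀ := by rw [← hEcard]; ring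
  have hle : hGfin.toFinset.card ≤ n * (q^2+q+1) := Nat.le_of_mul_le_mul_right hfinal hpos
  rwa [Set.ncard_eq_toFinset_card G hGfin]
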